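/- Let U ⊆ A^{ℤ²} be an additive shift space that is horizontally block gluing, and let Ω = {Ω(n)}_{n≥1} be an expanding system of finite subsets of ℤ² that is horizontally decomposable. If limsup_{n→∞} |∂Ω(n)|/|Ω(n)| = 0, then h_Ω(U) = h_r(U). (The same conclusion holds with 'horizontally' replaced by 'vertically' in both hypotheses.) -/

import Mathlib

open Filter
open scoped Classical

/-- The `m × n` rectangular lattice `Z_{m×n}(p)` with bottom-left corner `p`. -/
def Zrect (m n : ℕ) (p : ℤ × ℤ) : Finset (ℤ × ℤ) :=
  (Finset.range m ×ˢ Finset.range n).image (fun ab => (p.1 + (ab.1 : ℤ), p.2 + (ab.2 : ℤ)))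

/-- The number of patterns of `U` seen on the finite window `L`. -/
noncomputable def patternCount {A : Type*} (U : Set ((ℤ × ℤ) → A)) (L : Finset (ℤ × ℤ)) : ℕ :=
  Set.ncard ((fun x => fun p : L => x (p : ℤ × ℤ)) '' U)

/-- An additive shift space: nonempty, closed, translation invariant. -/
def IsShiftSpace {A : Type*} [TopologicalSpace A] (U : Set ((ℤ × ℤ) → A)) : Prop :=
  U.Nonempty ∧ IsClosed U ∧ ∀ v : ℤ × ℤ, ∀ x ∈ U, (fun p => x (p + v)) ∈ U

/-- An expanding system of finite sublattices of `ℤ²`. -/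
def IsExpandingSystem (Ω : ℕ → Finset (ℤ × ℤ)) : Prop :=
  (∀ n, Ω n ⊂ Ω (n + 1)) ∧ ∀ p : ℤ × ℤ, ∃ n, p ∈ Ω n

/-- The interior of a finite lattice. -/
def latInterior (L : Finset (ℤ × ℤ)) : Finset (ℤ × ℤ) :=
  L.filter (fun p => (p.1 + 1, p.2) ∈ L ∧ (p.1, p.2 + 1) ∈ L ∧ (p.1 + 1, p.2 + 1) ∈ L)

/-- The boundary of a finite lattice. -/
def latBoundary (L : Finset (ℤ × ℤ)) : Finset (ℤ × ℤ) := L \ latInterior L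

/-- The rectangular entropy `h_r(U)`. -/
noncomputable def rectEntropy {A : Type*} (U : Set ((ℤ × ℤ) → A)) : ℝ :=
  ⨅ mn : ℕ × ℕ, (1 / (((mn.1 + 1) * (mn.2 + 1) : ℕ) : ℝ)) *
    Real.log (patternCount U (Zrect (mn.1 + 1) (mn.2 + 1) (0, 0)))

/-- The entropy `h_Ω(U)` along an expanding system `Ω`. -/
noncomputable def entropyAlong {A : Type*} (U : Set ((ℤ × ℤ) → A)) (Ω : ℕ → Finset (ℤ × ℤ)) : ℝ :=
  Filter.limsup (fun n => (1 / ((Ω n).card : ℝ)) * Real.log (patternCount U (Ω n))) Filter.atTop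

/-- `Ω_{k,l}(n)`: the union of grid rectangles `Z_{k×l}((ak,bl))` contained in `L`. -/
noncomputable def gridPart (k l : ℕ) (L : Finset (ℤ × ℤ)) : Finset (ℤ × ℤ) :=
  L.filter (fun p => ∃ a b : ℤ,
    p ∈ Zrect k l ((k : ℤ) * a, (l : ℤ) * b) ∧ Zrect k l ((k : ℤ) * a, (l : ℤ) * b) ⊆ L)

/-- `β_{k,l}` : the size of the complement of the grid part. -/
noncomputable def betaKL (k l : ℕ) (L : Finset (ℤ × ℤ)) : ℕ := (L \ gridPart k l L).card

/-- `α_{k,l}` : the number of grid rectangles contained in `L`. -/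
noncomputable def alphaKL (k l : ℕ) (L : Finset (ℤ × ℤ)) : ℕ :=
  Set.ncard {ab : ℤ × ℤ | Zrect k l ((k : ℤ) * ab.1, (l : ℤ) * ab.2) ⊆ L}

/-- A tessellation of `ℤ²`. -/
def IsTessellation (T : Finset (ℤ × ℤ)) : Prop :=
  ∃ v : ℕ → ℤ × ℤ,
    (∀ i j : ℕ, i ≠ j → Disjoint (T.image (· + v i)) (T.image (· + v j))) ∧
    ∀ p : ℤ × ℤ, ∃ i : ℕ, p ∈ T.image (· + v i)

/-- Euclidean distance between points of `ℤ²`. -/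
noncomputable def euclDist (p q : ℤ × ℤ) : ℝ :=
  Real.sqrt (((p.1 - q.1 : ℤ) : ℝ) ^ 2 + ((p.2 - q.2 : ℤ) : ℝ) ^ 2)

/-- Block gluing with gap `M`. -/
def BlockGluingWithGap {A : Type*} (U : Set ((ℤ × ℤ) → A)) (M : ℕ) : Prop :=
  ∀ (m₁ n₁ m₂ n₂ : ℕ) (c₁ c₂ : ℤ × ℤ),
    (∀ p ∈ Zrect m₁ n₁ c₁, ∀ q ∈ Zrect m₂ n₂ c₂, (M : ℝ) ≤ euclDist p q) →
    ∀ x₁ ∈ U, ∀ x₂ ∈ U, ∃ x ∈ U,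
      (∀ p ∈ Zrect m₁ n₁ c₁, x p = x₁ p) ∧ ∀ q ∈ Zrect m₂ n₂ c₂, x q = x₂ q

/-- Block gluing. -/
def IsBlockGluing {A : Type*} (U : Set ((ℤ × ℤ) → A)) : Prop :=
  ∃ M : ℕ, 1 ≤ M ∧ BlockGluingWithGap U M

/-- A full shift on a sub-alphabet. -/
def IsFullShift {A : Type*} (U : Set ((ℤ × ℤ) → A)) : Prop :=
  ∃ B : Set A, U = {x | ∀ p : ℤ × ℤ, x p ∈ B}

/-- Shift of finite type. -/
def IsSFT {A : Type*} (U : Set ((ℤ × ℤ) → A)) : Prop :=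
  ∃ (F : Finset (ℤ × ℤ)) (P : Set (F → A)),
    U = {x | ∀ v : ℤ × ℤ, (fun p : F => x (v + (p : ℤ × ℤ))) ∈ P}

/-- `(i,j)` has horizontal length `m` in `L`. -/
def HasHorizLength (L : Finset (ℤ × ℤ)) (p : ℤ × ℤ) (m : ℕ) : Prop :=
  1 ≤ m ∧ (∃ c : ℤ × ℤ, p ∈ Zrect m 1 c ∧ Zrect m 1 c ⊆ L) ∧
    ∀ m' : ℕ, m < m' → ¬ ∃ c : ℤ × ℤ, p ∈ Zrect m' 1 c ∧ Zrect m' 1 c ⊆ L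

/-- `(i,j)` has vertical length `m` in `L`. -/
def HasVertLength (L : Finset (ℤ × ℤ)) (p : ℤ × ℤ) (m : ℕ) : Prop :=
  1 ≤ m ∧ (∃ c : ℤ × ℤ, p ∈ Zrect 1 m c ∧ Zrect 1 m c ⊆ L) ∧
    ∀ m' : ℕ, m < m' → ¬ ∃ c : ℤ × ℤ, p ∈ Zrect 1 m' c ∧ Zrect 1 m' c ⊆ L

noncomputable def betaHoriz (m : ℕ) (L : Finset (ℤ × ℤ)) : ℕ :=
  (L.filter (fun p => HasHorizLength L p m)).card

noncomputable def betaVert (m : ℕ) (L : Finset (ℤ × ℤ)) : ℕ :=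
  (L.filter (fun p => HasVertLength L p m)).card

/-- The one-dimensional sublattice segment `{s • v : 0 ≤ s ≤ n-1}`. -/
def lineSegment (v : ℤ × ℤ) (n : ℕ) : Finset (ℤ × ℤ) :=
  (Finset.range n).image (fun s : ℕ => ((s : ℤ) * v.1, (s : ℤ) * v.2))

/-- The projectional entropy along the one-dimensional sublattice generated by `v`. -/
noncomputable def projEntropy {A : Type*} (U : Set ((ℤ × ℤ) → A)) (v : ℤ × ℤ) : ℝ :=
  ⨅ n : ℕ, (1 / (n + 1 : ℝ)) * Real.log (patternCount U (lineSegment v (n + 1)))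

/-- `ĥ⁽¹⁾(U)`: supremum of projectional entropies over one-dimensional sublattices. -/
noncomputable def hHatOne {A : Type*} (U : Set ((ℤ × ℤ) → A)) : ℝ :=
  ⨆ v : {w : ℤ × ℤ // w ≠ 0}, projEntropy U (v : ℤ × ℤ)

/-- The horizontal golden-mean shift. -/
def goldenMeanShift : Set ((ℤ × ℤ) → Fin 2) :=
  {x | ∀ p : ℤ × ℤ, x p * x (p.1 + 1, p.2) = 0}

/-- The sequence `a_k`: `a_1 = 2`, `a_2 = 3`, `a_k = a_{k-1} + a_{k-2}`. -/
def aSeq : ℕ → ℕ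
  | 0 => 1
  | 1 => 2
  | (k + 2) => aSeq (k + 1) + aSeq k


/-- Horizontally block gluing: gluing of rectangles with the same bottom `j`-coordinate. -/
def HorizBlockGluingWithGap {A : Type*} (U : Set ((ℤ × ℤ) → A)) (M : ℕ) : Prop :=
  ∀ (m₁ n₁ m₂ n₂ : ℕ) (i₁ i₂ j : ℤ),
    (∀ p ∈ Zrect m₁ n₁ (i₁, j), ∀ q ∈ Zrect m₂ n₂ (i₂, j), (M : ℝ) ≤ euclDist p q) →
    ∀ x₁ ∈ U, ∀ x₂ ∈ U, ∃ x ∈ U,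
      (∀ p ∈ Zrect m₁ n₁ (i₁, j), x p = x₁ p) ∧ ∀ q ∈ Zrect m₂ n₂ (i₂, j), x q = x₂ q

/-- Vertically block gluing: gluing of rectangles with the same left `i`-coordinate. -/
def VertBlockGluingWithGap {A : Type*} (U : Set ((ℤ × ℤ) → A)) (M : ℕ) : Prop :=
  ∀ (m₁ n₁ m₂ n₂ : ℕ) (i j₁ j₂ : ℤ),
    (∀ p ∈ Zrect m₁ n₁ (i, j₁), ∀ q ∈ Zrect m₂ n₂ (i, j₂), (M : ℝ) ≤ euclDist p q) →
    ∀ x₁ ∈ U, ∀ x₂ ∈ U, ∃ x ∈ U,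
      (∀ p ∈ Zrect m₁ n₁ (i, j₁), x p = x₁ p) ∧ ∀ q ∈ Zrect m₂ n₂ (i, j₂), x q = x₂ q

/-- `Ω` is horizontally decomposable: each `Ω(n)` splits, by cutting along horizontal
lines, into at most `m` pairwise disjoint rectangular lattices. -/
def HorizDecomposable (Ω : ℕ → Finset (ℤ × ℤ)) : Prop :=
  ∃ m : ℕ, 1 ≤ m ∧ ∀ n : ℕ, ∃ k : ℕ, 1 ≤ k ∧ k ≤ m ∧ ∃ J : Fin k → ℤ × ℤ,
    (∀ i : Fin k, ∃ (mi ni : ℕ) (c : ℤ × ℤ),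
        (Ω n).filter (fun p => (J i).1 ≤ p.2 ∧ p.2 ≤ (J i).2) = Zrect mi ni c) ∧
    (∀ i i' : Fin k, i ≠ i' →
        Disjoint ((Ω n).filter (fun p => (J i).1 ≤ p.2 ∧ p.2 ≤ (J i).2))
          ((Ω n).filter (fun p => (J i').1 ≤ p.2 ∧ p.2 ≤ (J i').2))) ∧
    ∀ p ∈ Ω n, ∃ i : Fin k, (J i).1 ≤ p.2 ∧ p.2 ≤ (J i).2

/-- `Ω` is vertically decomposable: each `Ω(n)` splits, by cutting along vertical
lines, into at most `m` pairwise disjoint rectangular lattices. -/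
def VertDecomposable (Ω : ℕ → Finset (ℤ × ℤ)) : Prop :=
  ∃ m : ℕ, 1 ≤ m ∧ ∀ n : ℕ, ∃ k : ℕ, 1 ≤ k ∧ k ≤ m ∧ ∃ J : Fin k → ℤ × ℤ,
    (∀ i : Fin k, ∃ (mi ni : ℕ) (c : ℤ × ℤ),
        (Ω n).filter (fun p => (J i).1 ≤ p.1 ∧ p.1 ≤ (J i).2) = Zrect mi ni c) ∧
    (∀ i i' : Fin k, i ≠ i' →
        Disjoint ((Ω n).filter (fun p => (J i).1 ≤ p.1 ∧ p.1 ≤ (J i).2))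
          ((Ω n).filter (fun p => (J i').1 ≤ p.1 ∧ p.1 ≤ (J i').2))) ∧
    ∀ p ∈ Ω n, ∃ i : Fin k, (J i).1 ≤ p.1 ∧ p.1 ≤ (J i).2


set_option linter.unusedSectionVars false
set_option linter.unusedVariables false
set_option maxHeartbeats 1000000

section Counting
variable {α β γ : Type*}

lemma countKey (U : Set α) (hU : U.Nonempty) (F : α → β) (G : α → γ)
    (h : ∀ x ∈ U, ∀ y ∈ U, F x = F y → G x = G y) :
    ∃ Φ : β → γ, (∀ x ∈ U, Φ (F x) = G x) ∧ Φ '' (F '' U) = G '' U := by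
  have : Nonempty α := ⟨hU.some⟩
  refine ⟨fun b => G (Function.invFunOn F U b), ?_, ?_⟩
  · intro x hx
    have h1 : Function.invFunOn F U (F x) ∈ U := Function.invFunOn_mem ⟨x, hx, rfl⟩
    have h2 : F (Function.invFunOn F U (F x)) = F x := Function.invFunOn_eq ⟨x, hx, rfl⟩
    exact h _ h1 x hx h2
  · rw [Set.image_image]
    apply Set.image_congr
    intro x hx
    have h1 : Function.invFunOn F U (F x) ∈ U := Function.invFunOn_mem ⟨x, hx, rfl⟩
    have h2 : F (Function.invFunOn F U (F x)) = F x := Function.invFunOn_eq ⟨x, hx, rfl⟩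
    exact h _ h1 x hx h2

lemma countEq (U : Set α) (hU : U.Nonempty) (F : α → β) (G : α → γ)
    (h : ∀ x ∈ U, ∀ y ∈ U, (F x = F y ↔ G x = G y)) :
    (F '' U).ncard = (G '' U).ncard := by
  obtain ⟨Φ, hΦ, himg⟩ := countKey U hU F G (fun x hx y hy => (h x hx y hy).mp)
  have hinj : Set.InjOn Φ (F '' U) := by
    rintro _ ⟨x, hx, rfl⟩ _ ⟨y, hy, rfl⟩ hxy
    rw [hΦ x hx, hΦ y hy] at hxy
    exact (h x hx y hy).mpr hxy
  have h2 := Set.ncard_image_of_injOn hinj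
  rw [himg] at h2
  exact h2.symm

lemma countLe (U : Set α) (hU : U.Nonempty) (F : α → β) (G : α → γ)
    (hfin : (F '' U).Finite)
    (h : ∀ x ∈ U, ∀ y ∈ U, F x = F y → G x = G y) :
    (G '' U).ncard ≤ (F '' U).ncard := by
  obtain ⟨Φ, _, himg⟩ := countKey U hU F G h
  rw [← himg]
  exact Set.ncard_image_le hfin

end Counting

section PC
variable {A : Type*} [Fintype A] {U : Set ((ℤ × ℤ) → A)}

lemma pc_def (L : Finset (ℤ × ℤ)) :
    patternCount U L = Set.ncard ((fun x => fun p : L => x (p : ℤ × ℤ)) '' U) := rfl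

lemma restr_eq_iff (L : Finset (ℤ × ℤ)) (x y : (ℤ × ℤ) → A) :
    ((fun p : L => x (p : ℤ × ℤ)) = fun p : L => y (p : ℤ × ℤ)) ↔ ∀ p ∈ L, x p = y p := by
  rw [funext_iff]
  constructor
  · intro h p hp; exact h ⟨p, hp⟩
  · intro h p; exact h p p.2

lemma pc_pos (hU : U.Nonempty) (L : Finset (ℤ × ℤ)) : 1 ≤ patternCount U L := by
  rw [pc_def]
  have hfin : ((fun x => fun p : L => x (p : ℤ × ℤ)) '' U).Finite := Set.toFinite _
  have hne : ((fun x => fun p : L => x (p : ℤ × ℤ)) '' U).Nonempty := hU.image _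
  exact (Set.ncard_pos hfin).mpr hne

lemma pc_mono (hU : U.Nonempty) {L L' : Finset (ℤ × ℤ)} (h : L' ⊆ L) :
    patternCount U L' ≤ patternCount U L := by
  rw [pc_def, pc_def]
  refine countLe U hU _ _ (Set.toFinite _) ?_
  intro x hx y hy hxy
  rw [restr_eq_iff] at hxy ⊢
  exact fun p hp => hxy p (h hp)

lemma pc_le_pow (L : Finset (ℤ × ℤ)) : patternCount U L ≤ Fintype.card A ^ L.card := by
  rw [pc_def]
  calc Set.ncard ((fun x => fun p : L => x (p : ℤ × ℤ)) '' U)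
      ≤ (Set.univ : Set (L → A)).ncard := Set.ncard_le_ncard (Set.subset_univ _) (Set.toFinite _)
    _ = Fintype.card (L → A) := by rw [Set.ncard_univ, Nat.card_eq_fintype_card]
    _ = Fintype.card A ^ L.card := by rw [Fintype.card_fun, Fintype.card_coe]

lemma pc_translate (hU : U.Nonempty)
    (hshift : ∀ v : ℤ × ℤ, ∀ x ∈ U, (fun p => x (p + v)) ∈ U)
    (L : Finset (ℤ × ℤ)) (v : ℤ × ℤ) :
    patternCount U (L.image (· + v)) = patternCount U L := by
  have himg : (fun x : (ℤ × ℤ) → A => fun p => x (p + v)) '' U = U := by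
    apply Set.Subset.antisymm
    · rintro _ ⟨x, hx, rfl⟩; exact hshift v x hx
    · intro x hx
      refine ⟨fun p => x (p + -v), hshift (-v) x hx, ?_⟩
      funext p; simp
  rw [pc_def, pc_def]
  have := countEq U hU (fun x => fun p : (L.image (· + v)) => x (p : ℤ × ℤ))
    (fun x => (fun p : L => (fun q => x (q + v)) (p : ℤ × ℤ))) ?_
  · rw [this]
    have : ((fun x : (ℤ × ℤ) → A => (fun p : L => (fun q => x (q + v)) (p : ℤ × ℤ))) '' U)
        = (fun x : (ℤ × ℤ) → A => fun p : L => x (p : ℤ × ℤ)) ''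
          ((fun x : (ℤ × ℤ) → A => fun p => x (p + v)) '' U) := by
      rw [← Set.image_comp]; rfl
    rw [this, himg]
  · intro x hx y hy
    constructor
    · intro h
      funext p
      have := congrFun h ⟨(p : ℤ × ℤ) + v, Finset.mem_image_of_mem _ p.2⟩
      exact this
    · intro h
      funext q
      obtain ⟨p, hp, hpq⟩ := Finset.mem_image.mp q.2
      have := congrFun h ⟨p, hp⟩
      simp only at this
      have h2 : x (p + v) = y (p + v) := this
      show x ↑q = y ↑q
      rw [show (q : ℤ × ℤ) = p + v from hpq.symm]
      exact h2

lemma pc_union_le (hU : U.Nonempty) (L₁ L₂ : Finset (ℤ × ℤ)) :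
    patternCount U (L₁ ∪ L₂) ≤ patternCount U L₁ * patternCount U L₂ := by
  classical
  rw [pc_def, pc_def, pc_def]
  have heq := countEq U hU (fun x => fun p : (L₁ ∪ L₂ : Finset (ℤ × ℤ)) => x (p : ℤ × ℤ))
    (fun x => ((fun p : L₁ => x (p : ℤ × ℤ)), (fun p : L₂ => x (p : ℤ × ℤ)))) ?_
  · rw [heq]
    have hsub : ((fun x : (ℤ × ℤ) → A =>
        ((fun p : L₁ => x (p : ℤ × ℤ)), (fun p : L₂ => x (p : ℤ × ℤ)))) '' U) ⊆
        ((fun x : (ℤ × ℤ) → A => fun p : L₁ => x (p : ℤ × ℤ)) '' U) ×ˢ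
        ((fun x : (ℤ × ℤ) → A => fun p : L₂ => x (p : ℤ × ℤ)) '' U) := by
      rintro _ ⟨x, hx, rfl⟩
      exact ⟨⟨x, hx, rfl⟩, ⟨x, hx, rfl⟩⟩
    calc _ ≤ (((fun x : (ℤ × ℤ) → A => fun p : L₁ => x (p : ℤ × ℤ)) '' U) ×ˢ
        ((fun x : (ℤ × ℤ) → A => fun p : L₂ => x (p : ℤ × ℤ)) '' U)).ncard :=
          Set.ncard_le_ncard hsub (Set.toFinite _)
      _ = _ := by
          rw [Set.ncard_eq_toFinset_card', Set.ncard_eq_toFinset_card',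
            Set.ncard_eq_toFinset_card', Set.toFinset_prod, Finset.card_product]
  · intro x hx y hy
    rw [restr_eq_iff, Prod.ext_iff, restr_eq_iff, restr_eq_iff]
    constructor
    · intro h
      exact ⟨fun p hp => h p (Finset.mem_union_left _ hp),
             fun p hp => h p (Finset.mem_union_right _ hp)⟩
    · intro h p hp
      rcases Finset.mem_union.mp hp with hp | hp
      exacts [h.1 p hp, h.2 p hp]

lemma pc_biUnion_le (hU : U.Nonempty) {κ : Type*} [DecidableEq κ] (T : Finset κ)
    (f : κ → Finset (ℤ × ℤ)) :
    patternCount U (T.biUnion f) ≤ ∏ i ∈ T, patternCount U (f i) := by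
  classical
  induction T using Finset.induction_on with
  | empty =>
      simp only [Finset.biUnion_empty, Finset.prod_empty]
      -- patternCount of ∅ : need ≤ 1, in fact image is a singleton-ish; card ≤ 1
      rw [pc_def]
      have : ((fun x : (ℤ × ℤ) → A => fun p : (∅ : Finset (ℤ × ℤ)) => x (p : ℤ × ℤ)) '' U) ⊆
          {fun p : (∅ : Finset (ℤ × ℤ)) => ((Finset.notMem_empty _ p.2).elim : A)} := by
        rintro _ ⟨x, hx, rfl⟩
        simp only [Set.mem_singleton_iff]
        funext p
        exact (Finset.notMem_empty _ p.2).elim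
      calc _ ≤ ({fun p : (∅ : Finset (ℤ × ℤ)) => ((Finset.notMem_empty _ p.2).elim : A)} :
            Set _).ncard := Set.ncard_le_ncard this (Set.toFinite _)
        _ = 1 := Set.ncard_singleton _
  | insert _ _ ha ih =>
      rename_i a T
      rw [Finset.biUnion_insert, Finset.prod_insert ha]
      calc patternCount U (f a ∪ T.biUnion f)
          ≤ patternCount U (f a) * patternCount U (T.biUnion f) := pc_union_le hU _ _
        _ ≤ _ := Nat.mul_le_mul_left _ ih

end PC

section Shearer
variable {ι A : Type*} [Fintype ι] [DecidableEq ι]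

noncomputable def shCnt (S : Finset (ι → A)) (V : Finset ι) (f : ι → A) : ℕ :=
  (S.filter (fun g => ∀ i ∈ V, g i = f i)).card

noncomputable def shPhi (S : Finset (ι → A)) (V : Finset ι) : ℝ :=
  ∑ f ∈ S, Real.log (shCnt S V f)

noncomputable def shProj (S : Finset (ι → A)) (V : Finset ι) : Finset (ι → Option A) :=
  S.image (fun f i => if i ∈ V then some (f i) else none)

variable {S : Finset (ι → A)}

lemma shCnt_pos {V : Finset ι} {f : ι → A} (hf : f ∈ S) : 0 < shCnt S V f :=
  Finset.card_pos.mpr ⟨f, Finset.mem_filter.mpr ⟨hf, fun i _ => rfl⟩⟩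

lemma shCnt_le_of_subset {V W : Finset ι} (h : V ⊆ W) (f : ι → A) :
    shCnt S W f ≤ shCnt S V f := by
  apply Finset.card_le_card
  intro g hg
  rw [Finset.mem_filter] at hg ⊢
  exact ⟨hg.1, fun i hi => hg.2 i (h hi)⟩

lemma shCnt_congr {V : Finset ι} {f g : ι → A} (h : ∀ i ∈ V, f i = g i) :
    shCnt S V f = shCnt S V g := by
  unfold shCnt
  congr 1
  apply Finset.filter_congr
  intro x _
  constructor
  · intro hx i hi; rw [← h i hi]; exact hx i hi
  · intro hx i hi; rw [h i hi]; exact hx i hi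

lemma shPhi_anti {V W : Finset ι} (h : V ⊆ W) : shPhi S W ≤ shPhi S V := by
  apply Finset.sum_le_sum
  intro f hf
  have h1 : (0:ℝ) < shCnt S W f := by exact_mod_cast shCnt_pos hf
  have h2 : (shCnt S W f : ℝ) ≤ shCnt S V f := by exact_mod_cast shCnt_le_of_subset h f
  exact Real.log_le_log h1 h2

lemma shPhi_empty : shPhi S ∅ = S.card * Real.log S.card := by
  unfold shPhi shCnt
  rw [Finset.sum_congr rfl (fun f _ => by
    rw [show S.filter (fun g => ∀ i ∈ (∅ : Finset ι), g i = f i) = S from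
      Finset.filter_true_of_mem (fun g _ => fun i hi => absurd hi (Finset.notMem_empty i))])]
  rw [Finset.sum_const, nsmul_eq_mul]

lemma shPhi_univ : shPhi S Finset.univ = 0 := by
  unfold shPhi
  apply Finset.sum_eq_zero
  intro f hf
  have hone : S.filter (fun g => ∀ i ∈ (Finset.univ : Finset ι), g i = f i) = {f} := by
    ext g
    simp only [Finset.mem_filter, Finset.mem_singleton, Finset.mem_univ, forall_true_left]
    constructor
    · intro ⟨_, hg⟩; funext i; exact hg i
    · rintro rfl; exact ⟨hf, fun i => rfl⟩
  unfold shCnt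
  rw [hone, Finset.card_singleton]
  simp

/-- Core submodularity step, proved via `log x ≤ x - 1`. -/
lemma shPhi_submod {V W : Finset ι} (hVW : V ⊆ W) {i : ι} :
    shPhi S W - shPhi S (insert i W) ≤ shPhi S V - shPhi S (insert i V) := by
  set a : (ι → A) → ℝ := fun f => (shCnt S V f : ℝ) with ha
  set a' : (ι → A) → ℝ := fun f => (shCnt S (insert i V) f : ℝ) with ha'
  set b : (ι → A) → ℝ := fun f => (shCnt S W f : ℝ) with hb
  set b' : (ι → A) → ℝ := fun f => (shCnt S (insert i W) f : ℝ) with hb'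
  have hapos : ∀ f ∈ S, 0 < a f := fun f hf => by
    simp only [ha]; exact_mod_cast shCnt_pos hf
  have ha'pos : ∀ f ∈ S, 0 < a' f := fun f hf => by
    simp only [ha']; exact_mod_cast shCnt_pos hf
  have hbpos : ∀ f ∈ S, 0 < b f := fun f hf => by
    simp only [hb]; exact_mod_cast shCnt_pos hf
  have hb'pos : ∀ f ∈ S, 0 < b' f := fun f hf => by
    simp only [hb']; exact_mod_cast shCnt_pos hf
  have hindW : ∀ f : ι → A, b f = ∑ g ∈ S, (if (∀ j ∈ W, g j = f j) then (1:ℝ) else 0) := by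
    intro f
    simp only [hb, shCnt, Finset.card_filter, Nat.cast_sum, Nat.cast_ite, Nat.cast_one,
      Nat.cast_zero]
  have hindV' : ∀ f : ι → A,
      a' f = ∑ h ∈ S, (if (∀ j ∈ insert i V, h j = f j) then (1:ℝ) else 0) := by
    intro f
    simp only [ha', shCnt, Finset.card_filter, Nat.cast_sum, Nat.cast_ite, Nat.cast_one,
      Nat.cast_zero]
  -- Claim 2 : for g ∈ S, ∑_f [g ≡_W f] a'(f)/b'(f) ≤ a g
  have claim2 : ∀ g ∈ S,
      ∑ f ∈ S, (if (∀ j ∈ W, g j = f j) then a' f / b' f else 0) ≤ a g := by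
    intro g hg
    have step1 : ∀ f ∈ S, (if (∀ j ∈ W, g j = f j) then a' f / b' f else 0)
        = ∑ h ∈ S, (if ((∀ j ∈ W, g j = f j) ∧ (∀ j ∈ insert i V, h j = f j))
            then 1 / b' f else 0) := by
      intro f _
      by_cases hP : (∀ j ∈ W, g j = f j)
      · rw [if_pos hP, hindV' f, Finset.sum_div]
        refine Finset.sum_congr rfl fun h _ => ?_
        by_cases hQ : (∀ j ∈ insert i V, h j = f j)
        · rw [if_pos hQ, if_pos ⟨hP, hQ⟩]
        · rw [if_neg hQ, if_neg (fun hc => hQ hc.2), zero_div]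
      · rw [if_neg hP]
        rw [eq_comm]
        apply Finset.sum_eq_zero
        intro h _
        rw [if_neg (by tauto)]
    rw [Finset.sum_congr rfl step1, Finset.sum_comm]
    -- now bound, for each h, the inner sum by the indicator that h ≡_V g
    have step2 : ∀ h ∈ S,
        (∑ f ∈ S, if ((∀ j ∈ W, g j = f j) ∧ (∀ j ∈ insert i V, h j = f j))
            then 1 / b' f else 0)
        ≤ (if (∀ j ∈ V, h j = g j) then (1:ℝ) else 0) := by
      intro h _
      set T := S.filter (fun f => (∀ j ∈ W, g j = f j) ∧ (∀ j ∈ insert i V, h j = f j)) with hT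
      have hsum : (∑ f ∈ S, if ((∀ j ∈ W, g j = f j) ∧ (∀ j ∈ insert i V, h j = f j))
          then 1 / b' f else 0) = ∑ f ∈ T, 1 / b' f := (Finset.sum_filter _ _).symm
      rw [hsum]
      rcases Finset.eq_empty_or_nonempty T with hTe | ⟨f₀, hf₀⟩
      · rw [hTe, Finset.sum_empty]
        split_ifs <;> norm_num
      · have hf₀' := Finset.mem_filter.mp hf₀
        have hhg : ∀ j ∈ V, h j = g j := by
          intro j hj
          rw [hf₀'.2.2 j (Finset.mem_insert_of_mem hj), hf₀'.2.1 j (hVW hj)]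
        rw [if_pos hhg]
        have hcard : ∀ f ∈ T, (T.card : ℝ) ≤ b' f := by
          intro f hfT
          have hfT' := Finset.mem_filter.mp hfT
          have hsub : T ⊆ S.filter (fun f' => ∀ j ∈ insert i W, f' j = f j) := by
            intro f' hf'T
            have hf'T' := Finset.mem_filter.mp hf'T
            rw [Finset.mem_filter]
            refine ⟨hf'T'.1, fun j hj => ?_⟩
            rcases Finset.mem_insert.mp hj with rfl | hjW
            · rw [← hf'T'.2.2 j (Finset.mem_insert_self j _),
                hfT'.2.2 j (Finset.mem_insert_self j _)]
            · rw [← hf'T'.2.1 j hjW, hfT'.2.1 j hjW]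
          have := Finset.card_le_card hsub
          have hb'def : b' f = ((S.filter (fun f' => ∀ j ∈ insert i W, f' j = f j)).card : ℝ) :=
            rfl
          rw [hb'def]
          exact_mod_cast this
        have hTpos : 0 < T.card := Finset.card_pos.mpr ⟨f₀, hf₀⟩
        have hTposR : (0:ℝ) < T.card := by exact_mod_cast hTpos
        calc ∑ f ∈ T, 1 / b' f ≤ ∑ f ∈ T, 1 / (T.card : ℝ) := by
              apply Finset.sum_le_sum
              intro f hfT
              exact one_div_le_one_div_of_le hTposR (hcard f hfT)
          _ = 1 := by
              rw [Finset.sum_const, nsmul_eq_mul]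
              field_simp
    calc (∑ h ∈ S, ∑ f ∈ S, if ((∀ j ∈ W, g j = f j) ∧ (∀ j ∈ insert i V, h j = f j))
            then 1 / b' f else 0)
        ≤ ∑ h ∈ S, (if (∀ j ∈ V, h j = g j) then (1:ℝ) else 0) := Finset.sum_le_sum step2
      _ = a g := by
          simp only [ha, shCnt, Finset.card_filter, Nat.cast_sum, Nat.cast_ite, Nat.cast_one,
            Nat.cast_zero]
  -- the key inequality
  have key : ∑ f ∈ S, (a' f * b f) / (a f * b' f) ≤ (S.card : ℝ) := by
    have e1 : ∑ f ∈ S, (a' f * b f) / (a f * b' f)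
        = ∑ g ∈ S, ∑ f ∈ S, (if (∀ j ∈ W, g j = f j) then (a' f / (a f * b' f)) else 0) := by
      rw [← Finset.sum_comm]
      apply Finset.sum_congr rfl
      intro f hf
      rw [show (a' f * b f) / (a f * b' f) = (a' f / (a f * b' f)) * b f from by ring,
        hindW f, Finset.mul_sum]
      exact Finset.sum_congr rfl fun g _ => by rw [mul_ite, mul_one, mul_zero]
    rw [e1]
    have e2 : ∀ g ∈ S,
        ∑ f ∈ S, (if (∀ j ∈ W, g j = f j) then (a' f / (a f * b' f)) else 0) ≤ 1 := by
      intro g hg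
      have e3 : ∀ f ∈ S, (if (∀ j ∈ W, g j = f j) then (a' f / (a f * b' f)) else 0)
          = (1 / a g) * (if (∀ j ∈ W, g j = f j) then a' f / b' f else 0) := by
        intro f hf
        by_cases hP : (∀ j ∈ W, g j = f j)
        · rw [if_pos hP, if_pos hP]
          have hag : a f = a g := by
            simp only [ha]
            exact_mod_cast (shCnt_congr (fun j hj => (hP j (hVW hj)).symm) :
              shCnt S V f = shCnt S V g)
          rw [hag]
          field_simp
        · simp [hP]
      rw [Finset.sum_congr rfl e3, ← Finset.mul_sum]
      have hag := hapos g hg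
      calc (1 / a g) * ∑ f ∈ S, (if (∀ j ∈ W, g j = f j) then a' f / b' f else 0)
          ≤ (1 / a g) * a g := by
            apply mul_le_mul_of_nonneg_left (claim2 g hg)
            positivity
        _ = 1 := by field_simp
    calc ∑ g ∈ S, ∑ f ∈ S, (if (∀ j ∈ W, g j = f j) then (a' f / (a f * b' f)) else 0)
        ≤ ∑ _g ∈ S, (1:ℝ) := Finset.sum_le_sum e2
      _ = S.card := by rw [Finset.sum_const, nsmul_eq_mul, mul_one]
  -- convert to logs
  have main : ∑ f ∈ S, Real.log ((a' f * b f) / (a f * b' f)) ≤ 0 := by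
    calc ∑ f ∈ S, Real.log ((a' f * b f) / (a f * b' f))
        ≤ ∑ f ∈ S, ((a' f * b f) / (a f * b' f) - 1) := by
          apply Finset.sum_le_sum
          intro f hf
          exact Real.log_le_sub_one_of_pos
            (div_pos (mul_pos (ha'pos f hf) (hbpos f hf)) (mul_pos (hapos f hf) (hb'pos f hf)))
      _ = (∑ f ∈ S, (a' f * b f) / (a f * b' f)) - S.card := by
          rw [Finset.sum_sub_distrib, Finset.sum_const, nsmul_eq_mul, mul_one]
      _ ≤ 0 := by linarith [key]
  have expand : ∀ f ∈ S, Real.log ((a' f * b f) / (a f * b' f))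
      = (Real.log (b f) - Real.log (b' f)) - (Real.log (a f) - Real.log (a' f)) := by
    intro f hf
    rw [Real.log_div (ne_of_gt (mul_pos (ha'pos f hf) (hbpos f hf)))
      (ne_of_gt (mul_pos (hapos f hf) (hb'pos f hf))),
      Real.log_mul (ne_of_gt (ha'pos f hf)) (ne_of_gt (hbpos f hf)),
      Real.log_mul (ne_of_gt (hapos f hf)) (ne_of_gt (hb'pos f hf))]
    ring
  have final : (shPhi S W - shPhi S (insert i W)) - (shPhi S V - shPhi S (insert i V))
      = ∑ f ∈ S, Real.log ((a' f * b f) / (a f * b' f)) := by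
    rw [Finset.sum_congr rfl expand]
    unfold shPhi
    rw [Finset.sum_sub_distrib, Finset.sum_sub_distrib, Finset.sum_sub_distrib]
  linarith [final ▸ main]

end Shearer

section ShearerMain
variable {ι A : Type*} [Fintype ι] [DecidableEq ι] {S : Finset (ι → A)}

noncomputable def shPre (ι : Type*) [Fintype ι] (k : ℕ) : Finset ι :=
  Finset.univ.filter (fun j => ((Fintype.equivFin ι) j : ℕ) < k)

noncomputable def shD (S : Finset (ι → A)) (k : ℕ) : ℝ :=
  shPhi S (shPre ι k) - shPhi S (shPre ι (k+1))

lemma mem_shPre {k : ℕ} {j : ι} : j ∈ shPre ι k ↔ ((Fintype.equivFin ι) j : ℕ) < k := by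
  simp [shPre]

lemma shD_nonneg (k : ℕ) : 0 ≤ shD S k := by
  have hsub : shPre ι k ⊆ shPre ι (k+1) := by
    intro j hj
    rw [mem_shPre] at hj ⊢
    omega
  have := shPhi_anti (S := S) hsub
  unfold shD
  linarith

lemma shProj_eq_iff {V : Finset ι} (f g : ι → A) :
    ((fun i => if i ∈ V then some (g i) else none) =
      (fun i => if i ∈ V then some (f i) else (none : Option A))) ↔ ∀ i ∈ V, g i = f i := by
  rw [funext_iff]
  constructor
  · intro h i hi
    have := h i
    rw [if_pos hi, if_pos hi] at this
    exact Option.some_injective _ this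
  · intro h i
    by_cases hi : i ∈ V
    · rw [if_pos hi, if_pos hi, h i hi]
    · rw [if_neg hi, if_neg hi]

lemma shPhi_proj_bound (hS : S.Nonempty) (V : Finset ι) :
    (S.card : ℝ) * Real.log S.card - shPhi S V ≤
      (S.card : ℝ) * Real.log ((shProj S V).card) := by
  have hScard : (0:ℝ) < S.card := by exact_mod_cast Finset.card_pos.mpr hS
  set pm : (ι → A) → (ι → Option A) := fun f => fun i => if i ∈ V then some (f i) else none
    with hpm
  have hK : 0 < (shProj S V).card := Finset.card_pos.mpr (hS.image _)
  have hKR : (0:ℝ) < (shProj S V).card := by exact_mod_cast hK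
  -- the fiberwise identity
  have hfib : ∑ f ∈ S, (1:ℝ) / (shCnt S V f) = ((shProj S V).card : ℝ) := by
    have hmap : ∀ f ∈ S, pm f ∈ shProj S V := fun f hf => Finset.mem_image_of_mem _ hf
    rw [← Finset.sum_fiberwise_of_maps_to hmap (fun f => (1:ℝ)/(shCnt S V f))]
    have hone : ∀ p ∈ shProj S V,
        (∑ f ∈ S.filter (fun f => pm f = p), (1:ℝ)/(shCnt S V f)) = 1 := by
      intro p hp
      obtain ⟨f₀, hf₀, hf₀p⟩ := Finset.mem_image.mp hp
      set Fib := S.filter (fun f => pm f = p) with hFib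
      have hcnt : ∀ f ∈ Fib, shCnt S V f = Fib.card := by
        intro f hf
        have hf' := Finset.mem_filter.mp hf
        unfold shCnt
        rw [hFib]
        congr 1
        apply Finset.filter_congr
        intro g _
        constructor
        · intro hag
          show pm g = p
          rw [← hf'.2]
          exact (shProj_eq_iff f g).mpr hag
        · intro hag
          apply (shProj_eq_iff f g).mp
          show pm g = pm f
          rw [hf'.2]
          exact hag
      have hFibne : Fib.Nonempty := ⟨f₀, Finset.mem_filter.mpr ⟨hf₀, hf₀p⟩⟩
      have hFibpos : (0:ℝ) < Fib.card := by exact_mod_cast Finset.card_pos.mpr hFibne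
      rw [Finset.sum_congr rfl (fun f hf => by rw [hcnt f hf])]
      rw [Finset.sum_const, nsmul_eq_mul]
      field_simp
    rw [Finset.sum_congr rfl hone, Finset.sum_const, nsmul_eq_mul, mul_one]
  -- pointwise log bound then sum
  have hpoint : ∀ f ∈ S,
      Real.log S.card - Real.log (shCnt S V f) - Real.log ((shProj S V).card)
        ≤ (S.card : ℝ) / ((shCnt S V f) * ((shProj S V).card)) - 1 := by
    intro f hf
    have hc : (0:ℝ) < shCnt S V f := by exact_mod_cast shCnt_pos hf
    have harg : (0:ℝ) < (S.card : ℝ) / ((shCnt S V f) * ((shProj S V).card)) :=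
      div_pos hScard (mul_pos hc hKR)
    have := Real.log_le_sub_one_of_pos harg
    rw [Real.log_div (ne_of_gt hScard) (ne_of_gt (mul_pos hc hKR)),
      Real.log_mul (ne_of_gt hc) (ne_of_gt hKR)] at this
    linarith
  have hsump := Finset.sum_le_sum hpoint
  have hlhs : ∑ f ∈ S, (Real.log S.card - Real.log (shCnt S V f) - Real.log ((shProj S V).card))
      = (S.card : ℝ) * Real.log S.card - shPhi S V
        - (S.card : ℝ) * Real.log ((shProj S V).card) := by
    rw [Finset.sum_sub_distrib, Finset.sum_sub_distrib, Finset.sum_const, nsmul_eq_mul,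
      Finset.sum_const, nsmul_eq_mul]
    rfl
  have hrhs : ∑ f ∈ S, ((S.card : ℝ) / ((shCnt S V f) * ((shProj S V).card)) - 1)
      = 0 := by
    rw [Finset.sum_sub_distrib, Finset.sum_const, nsmul_eq_mul, mul_one]
    have hterm : ∀ f ∈ S, (S.card : ℝ) / ((shCnt S V f) * ((shProj S V).card))
        = ((S.card : ℝ) / ((shProj S V).card)) * (1 / (shCnt S V f)) := by
      intro f hf
      ring
    rw [Finset.sum_congr rfl hterm, ← Finset.mul_sum, hfib]
    field_simp
    ring
  rw [hlhs, hrhs] at hsump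
  linarith

lemma shearer_chain (Bs : Finset ι) :
    ∑ i ∈ Bs, shD S ((Fintype.equivFin ι) i : ℕ) ≤ shPhi S ∅ - shPhi S Bs := by
  classical
  set e := Fintype.equivFin ι with he
  have aux : ∀ k : ℕ,
      ∑ i ∈ Bs.filter (fun j => (e j : ℕ) < k), shD S (e i)
        ≤ shPhi S ∅ - shPhi S (Bs.filter (fun j => (e j : ℕ) < k)) := by
    intro k
    induction k with
    | zero =>
        rw [show Bs.filter (fun j => (e j : ℕ) < 0) = ∅ from by
          apply Finset.filter_false_of_mem; intro j _; omega]
        simp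
    | succ k ih =>
        by_cases hkn : k < Fintype.card ι
        · set i₀ := e.symm ⟨k, hkn⟩ with hi₀
          have hei₀ : (e i₀ : ℕ) = k := by rw [hi₀, Equiv.apply_symm_apply]
          have hkey : ∀ j : ι, ((e j : ℕ) < k + 1) ↔ ((e j : ℕ) < k ∨ j = i₀) := by
            intro j
            constructor
            · intro hj
              rcases Nat.lt_succ_iff_lt_or_eq.mp hj with hj | hj
              · exact Or.inl hj
              · refine Or.inr ?_
                rw [hi₀]
                apply_fun e
                rw [Equiv.apply_symm_apply]
                exact Fin.ext hj
            · rintro (hj | rfl)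
              · omega
              · omega
          by_cases hmem : i₀ ∈ Bs
          · have hsplit : Bs.filter (fun j => (e j : ℕ) < k + 1)
                = insert i₀ (Bs.filter (fun j => (e j : ℕ) < k)) := by
              ext j
              simp only [Finset.mem_filter, Finset.mem_insert]
              constructor
              · rintro ⟨hjB, hjk⟩
                rcases (hkey j).mp hjk with hjk | rfl
                · exact Or.inr ⟨hjB, hjk⟩
                · exact Or.inl rfl
              · rintro (rfl | ⟨hjB, hjk⟩)
                · exact ⟨hmem, by omega⟩
                · exact ⟨hjB, by omega⟩
            have hnotmem : i₀ ∉ Bs.filter (fun j => (e j : ℕ) < k) := by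
              simp only [Finset.mem_filter]
              rintro ⟨_, hc⟩
              omega
            have hpresplit : shPre ι (k+1) = insert i₀ (shPre ι k) := by
              ext j
              rw [Finset.mem_insert, mem_shPre, mem_shPre, ← he, hkey j]
              tauto
            have hVW : Bs.filter (fun j => (e j : ℕ) < k) ⊆ shPre ι k := by
              intro j hj
              rw [mem_shPre, ← he]
              exact (Finset.mem_filter.mp hj).2
            have hi₀pre : shD S k ≤ shPhi S (Bs.filter (fun j => (e j : ℕ) < k))
                - shPhi S (insert i₀ (Bs.filter (fun j => (e j : ℕ) < k))) := by
              have hstep := shPhi_submod (S := S) hVW (i := i₀)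
              rw [← hpresplit] at hstep
              unfold shD
              linarith
            rw [hsplit, Finset.sum_insert hnotmem, hei₀]
            linarith
          · have hsplit : Bs.filter (fun j => (e j : ℕ) < k + 1)
                = Bs.filter (fun j => (e j : ℕ) < k) := by
              ext j
              simp only [Finset.mem_filter]
              constructor
              · rintro ⟨hjB, hjk⟩
                rcases (hkey j).mp hjk with hjk | rfl
                · exact ⟨hjB, hjk⟩
                · exact absurd hjB hmem
              · rintro ⟨hjB, hjk⟩
                exact ⟨hjB, by omega⟩
            rw [hsplit]
            exact ih
        · have hsplit : Bs.filter (fun j => (e j : ℕ) < k + 1)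
              = Bs.filter (fun j => (e j : ℕ) < k) := by
            apply Finset.filter_congr
            intro j _
            have : (e j : ℕ) < Fintype.card ι := (e j).isLt
            constructor <;> (intro; omega)
          rw [hsplit]
          exact ih
  have hfin := aux (Fintype.card ι)
  have hBs : Bs.filter (fun j => (e j : ℕ) < Fintype.card ι) = Bs := by
    apply Finset.filter_true_of_mem
    intro j _
    exact (e j).isLt
  rw [hBs] at hfin
  exact hfin

theorem shearer_main {κ : Type*} [Fintype κ] (hS : S.Nonempty) (B : κ → Finset ι) (t : ℕ)
    (hcov : ∀ i : ι, t ≤ (Finset.univ.filter (fun k : κ => i ∈ B k)).card) :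
    (t : ℝ) * Real.log S.card ≤ ∑ k : κ, Real.log ((shProj S (B k)).card) := by
  classical
  set e := Fintype.equivFin ι with he
  have hScard : (0:ℝ) < S.card := by exact_mod_cast Finset.card_pos.mpr hS
  -- telescoping : ∑_{i : ι} shD S (e i) = S.card * log S.card
  have htel : ∑ i : ι, shD S (e i) = (S.card : ℝ) * Real.log S.card := by
    have h1 : ∑ i : ι, shD S (e i) = ∑ m : Fin (Fintype.card ι), shD S (m : ℕ) :=
      Equiv.sum_comp e (fun m : Fin (Fintype.card ι) => shD S (m : ℕ))
    have h2 : ∑ m : Fin (Fintype.card ι), shD S (m : ℕ)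
        = ∑ k ∈ Finset.range (Fintype.card ι), shD S k := by
      rw [Fin.sum_univ_eq_sum_range]
    have h3 : ∑ k ∈ Finset.range (Fintype.card ι), shD S k
        = shPhi S (shPre ι 0) - shPhi S (shPre ι (Fintype.card ι)) := by
      unfold shD
      exact Finset.sum_range_sub' (fun k => shPhi S (shPre ι k)) (Fintype.card ι)
    have hpre0 : shPre ι 0 = ∅ := by
      apply Finset.filter_false_of_mem
      intro j _
      omega
    have hpren : shPre ι (Fintype.card ι) = Finset.univ := by
      unfold shPre
      apply Finset.filter_true_of_mem
      intro j _
      exact ((Fintype.equivFin ι) j).isLt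
    rw [h1, h2, h3, hpre0, hpren, shPhi_empty, shPhi_univ]
    ring
  have hstep1 : ∑ k : κ, ∑ i ∈ B k, shD S (e i) ≤ ∑ k : κ, (shPhi S ∅ - shPhi S (B k)) :=
    Finset.sum_le_sum (fun k _ => by rw [he]; exact shearer_chain (B k))
  -- double counting
  have hstep2 : (t : ℝ) * ((S.card : ℝ) * Real.log S.card)
      ≤ ∑ k : κ, ∑ i ∈ B k, shD S (e i) := by
    have h1 : ∀ k : κ, ∑ i ∈ B k, shD S (e i)
        = ∑ i : ι, (if i ∈ B k then shD S (e i) else 0) := by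
      intro k
      rw [Finset.sum_ite_mem, Finset.univ_inter]
    rw [Finset.sum_congr rfl (fun k _ => h1 k), Finset.sum_comm]
    have h2 : ∀ i : ι, ∑ k : κ, (if i ∈ B k then shD S (e i) else 0)
        = ((Finset.univ.filter (fun k : κ => i ∈ B k)).card : ℝ) * shD S (e i) := by
      intro i
      rw [← Finset.sum_filter, Finset.sum_const, nsmul_eq_mul]
    rw [Finset.sum_congr rfl (fun i _ => h2 i)]
    have h3 : ∀ i : ι, (t : ℝ) * shD S (e i)
        ≤ ((Finset.univ.filter (fun k : κ => i ∈ B k)).card : ℝ) * shD S (e i) := by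
      intro i
      apply mul_le_mul_of_nonneg_right _ (shD_nonneg (e i))
      exact_mod_cast hcov i
    calc (t : ℝ) * ((S.card : ℝ) * Real.log S.card) = ∑ i : ι, (t : ℝ) * shD S (e i) := by
          rw [← Finset.mul_sum, htel]
      _ ≤ _ := Finset.sum_le_sum (fun i _ => h3 i)
  -- projection bound
  have hstep3 : ∑ k : κ, (shPhi S ∅ - shPhi S (B k))
      ≤ (S.card : ℝ) * ∑ k : κ, Real.log ((shProj S (B k)).card) := by
    rw [Finset.mul_sum]
    apply Finset.sum_le_sum
    intro k _
    rw [shPhi_empty]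
    exact shPhi_proj_bound hS (B k)
  have hfinal : (t : ℝ) * ((S.card : ℝ) * Real.log S.card)
      ≤ (S.card : ℝ) * ∑ k : κ, Real.log ((shProj S (B k)).card) := by
    linarith
  rw [show (t : ℝ) * ((S.card : ℝ) * Real.log S.card)
      = (S.card : ℝ) * ((t:ℝ) * Real.log S.card) from by ring] at hfinal
  exact le_of_mul_le_mul_left hfinal hScard

end ShearerMain

lemma mem_Zrect {m n : ℕ} {c p : ℤ × ℤ} :
    p ∈ Zrect m n c ↔ c.1 ≤ p.1 ∧ p.1 < c.1 + m ∧ c.2 ≤ p.2 ∧ p.2 < c.2 + n := by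
  unfold Zrect
  rw [Finset.mem_image]
  constructor
  · rintro ⟨⟨a, b⟩, hab, rfl⟩
    rw [Finset.mem_product, Finset.mem_range, Finset.mem_range] at hab
    simp only
    omega
  · rintro ⟨h1, h2, h3, h4⟩
    refine ⟨((p.1 - c.1).toNat, (p.2 - c.2).toNat), ?_, ?_⟩
    · rw [Finset.mem_product, Finset.mem_range, Finset.mem_range]
      constructor <;> omega
    · have e1 : ((p.1 - c.1).toNat : ℤ) = p.1 - c.1 := Int.toNat_of_nonneg (by omega)
      have e2 : ((p.2 - c.2).toNat : ℤ) = p.2 - c.2 := Int.toNat_of_nonneg (by omega)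
      simp only [e1, e2]
      ext <;> simp <;> omega

lemma Zrect_card (m n : ℕ) (c : ℤ × ℤ) : (Zrect m n c).card = m * n := by
  unfold Zrect
  rw [Finset.card_image_of_injOn, Finset.card_product, Finset.card_range, Finset.card_range]
  intro ab hab ab' hab' he
  rw [Finset.mem_coe, Finset.mem_product, Finset.mem_range, Finset.mem_range] at hab hab'
  rw [Prod.ext_iff] at he
  simp only at he
  have h1 : (ab.1 : ℤ) = ab'.1 := by omega
  have h2 : (ab.2 : ℤ) = ab'.2 := by omega
  ext <;> omega

lemma Zrect_translate (m n : ℕ) (c : ℤ × ℤ) :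
    Zrect m n c = (Zrect m n (0, 0)).image (· + c) := by
  ext p
  rw [Finset.mem_image]
  constructor
  · intro hp
    rw [mem_Zrect] at hp
    refine ⟨p - c, ?_, by simp⟩
    rw [mem_Zrect]
    simp only [Prod.fst_sub, Prod.snd_sub]
    omega
  · rintro ⟨q, hq, rfl⟩
    rw [mem_Zrect] at hq ⊢
    simp only [Prod.fst_add, Prod.snd_add] at *
    omega

section Blocks
variable {k l : ℕ}

/-- The grid block containing a point. -/
def blkIdx (k l : ℕ) (p : ℤ × ℤ) : ℤ × ℤ := (p.1 / (k : ℤ), p.2 / (l : ℤ))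

def Blk (k l : ℕ) (ab : ℤ × ℤ) : Finset (ℤ × ℤ) := Zrect k l ((k : ℤ) * ab.1, (l : ℤ) * ab.2)

lemma mem_blkIdx (hk : 0 < k) (hl : 0 < l) (p : ℤ × ℤ) : p ∈ Blk k l (blkIdx k l p) := by
  unfold Blk blkIdx
  rw [mem_Zrect]
  have h1 := Int.mul_ediv_add_emod p.1 (k : ℤ)
  have h2 := Int.mul_ediv_add_emod p.2 (l : ℤ)
  have h3 := Int.emod_nonneg p.1 (show (k:ℤ) ≠ 0 by positivity)
  have h4 := Int.emod_nonneg p.2 (show (l:ℤ) ≠ 0 by positivity)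
  have h5 := Int.emod_lt_of_pos p.1 (show (0:ℤ) < k by positivity)
  have h6 := Int.emod_lt_of_pos p.2 (show (0:ℤ) < l by positivity)
  simp only
  omega

lemma blkIdx_eq_of_mem (hk : 0 < k) (hl : 0 < l) {p : ℤ × ℤ} {ab : ℤ × ℤ}
    (h : p ∈ Blk k l ab) : blkIdx k l p = ab := by
  unfold Blk at h
  rw [mem_Zrect] at h
  simp only at h
  unfold blkIdx
  have e1 : p.1 / (k : ℤ) = ab.1 := by
    have h1 := Int.mul_ediv_add_emod p.1 (k : ℤ)
    have h3 := Int.emod_nonneg p.1 (show (k:ℤ) ≠ 0 by positivity)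
    have h5 := Int.emod_lt_of_pos p.1 (show (0:ℤ) < k by positivity)
    nlinarith [sq_nonneg (p.1 / (k:ℤ) - ab.1)]
  have e2 : p.2 / (l : ℤ) = ab.2 := by
    have h1 := Int.mul_ediv_add_emod p.2 (l : ℤ)
    have h3 := Int.emod_nonneg p.2 (show (l:ℤ) ≠ 0 by positivity)
    have h5 := Int.emod_lt_of_pos p.2 (show (0:ℤ) < l by positivity)
    nlinarith [sq_nonneg (p.2 / (l:ℤ) - ab.2)]
  ext <;> simp [e1, e2]

/-- The 1-D walk lemma (increasing direction). -/
lemma walk_up (P : ℤ → Prop) : ∀ (d : ℕ) (x y : ℤ), y - x = d → P x → ¬ P y →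
    ∃ z, x ≤ z ∧ z < y ∧ P z ∧ ¬ P (z + 1) := by
  intro d
  induction d with
  | zero =>
      intro x y hd hx hy
      have : x = y := by omega
      exact absurd (this ▸ hx) hy
  | succ d ih =>
      intro x y hd hx hy
      by_cases hy1 : P (y - 1)
      · exact ⟨y - 1, by omega, by omega, hy1, by simpa using hy⟩
      · rcases Nat.eq_zero_or_pos d with rfl | hdpos
        · exact absurd (show x = y - 1 by omega ▸ hx) (by
            have : x = y - 1 := by omega
            rw [this] at hx
            exact absurd hx hy1)
        · obtain ⟨z, hz1, hz2, hz3, hz4⟩ := ih x (y - 1) (by omega) hx hy1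
          exact ⟨z, hz1, by omega, hz3, hz4⟩

lemma walk_gen (P : ℤ → Prop) {x y : ℤ} (hx : P x) (hy : ¬ P y) :
    ∃ z, min x y ≤ z ∧ z ≤ max x y ∧ P z ∧ (¬ P (z + 1) ∨ ¬ P (z - 1)) := by
  rcases le_or_gt x y with hxy | hxy
  · obtain ⟨z, h1, h2, h3, h4⟩ := walk_up P (y - x).toNat x y (by omega) hx hy
    exact ⟨z, by omega, by omega, h3, Or.inl h4⟩
  · obtain ⟨z, h1, h2, h3, h4⟩ := walk_up (fun t => P (-t)) (x - y).toNat (-x) (-y)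
      (by omega) (by simpa using hx) (by simpa using hy)
    refine ⟨-z, by omega, by omega, h3, Or.inr ?_⟩
    intro hc
    apply h4
    simpa [show -(z+1) = -z - 1 by ring] using hc

end Blocks

section BadCount
variable {k l : ℕ}

def Dset (L : Finset (ℤ × ℤ)) : Finset (ℤ × ℤ) :=
  L.filter (fun r => (r.1 + 1, r.2) ∉ L ∨ (r.1, r.2 + 1) ∉ L ∨
    (r.1 - 1, r.2) ∉ L ∨ (r.1, r.2 - 1) ∉ L)

lemma Dset_card_le (L : Finset (ℤ × ℤ)) : (Dset L).card ≤ 4 * (latBoundary L).card := by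
  classical
  set D1 := L.filter (fun r => (r.1 + 1, r.2) ∉ L) with hD1
  set D2 := L.filter (fun r => (r.1, r.2 + 1) ∉ L) with hD2
  set D3 := L.filter (fun r => (r.1 - 1, r.2) ∉ L) with hD3
  set D4 := L.filter (fun r => (r.1, r.2 - 1) ∉ L) with hD4
  have hsub : Dset L ⊆ D1 ∪ D2 ∪ D3 ∪ D4 := by
    intro r hr
    rw [Dset, Finset.mem_filter] at hr
    simp only [Finset.mem_union, hD1, hD2, hD3, hD4, Finset.mem_filter]
    tauto
  have hb1 : D1 ⊆ latBoundary L := by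
    intro r hr
    rw [hD1, Finset.mem_filter] at hr
    rw [latBoundary, Finset.mem_sdiff]
    refine ⟨hr.1, fun hc => ?_⟩
    rw [latInterior, Finset.mem_filter] at hc
    exact hr.2 hc.2.1
  have hb2 : D2 ⊆ latBoundary L := by
    intro r hr
    rw [hD2, Finset.mem_filter] at hr
    rw [latBoundary, Finset.mem_sdiff]
    refine ⟨hr.1, fun hc => ?_⟩
    rw [latInterior, Finset.mem_filter] at hc
    exact hr.2 hc.2.2.1
  have hinj1 : Function.Injective (fun r : ℤ × ℤ => r + ((1:ℤ), (0:ℤ))) := fun r r' h => by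
    rw [Prod.ext_iff] at h ⊢
    simp only [Prod.fst_add, Prod.snd_add] at h
    omega
  have hinj2 : Function.Injective (fun r : ℤ × ℤ => r + ((0:ℤ), (1:ℤ))) := fun r r' h => by
    rw [Prod.ext_iff] at h ⊢
    simp only [Prod.fst_add, Prod.snd_add] at h
    omega
  have hb3 : D3.card ≤ D1.card := by
    have he : D3 = L \ L.image (fun r => r + ((1:ℤ), (0:ℤ))) := by
      ext r
      rw [hD3, Finset.mem_filter, Finset.mem_sdiff, Finset.mem_image]
      constructor
      · rintro ⟨hrL, hr⟩
        refine ⟨hrL, fun ⟨s, hs, hsr⟩ => hr ?_⟩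
        have : s = (r.1 - 1, r.2) := by
          rw [Prod.ext_iff] at hsr ⊢
          simp only [Prod.fst_add, Prod.snd_add] at hsr
          constructor <;> simp <;> omega
        rwa [← this]
      · rintro ⟨hrL, hr⟩
        refine ⟨hrL, fun hc => hr ⟨(r.1 - 1, r.2), hc, ?_⟩⟩
        rw [Prod.ext_iff]
        constructor <;> simp
    rw [he, Finset.card_sdiff_comm (by rw [Finset.card_image_of_injective _ hinj1])]
    apply Finset.card_le_card_of_injOn (fun r => r - ((1:ℤ), (0:ℤ)))
    · intro r hr
      simp only [Finset.mem_coe] at hr ⊢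
      rw [Finset.mem_sdiff, Finset.mem_image] at hr
      obtain ⟨⟨s, hs, hsr⟩, hrL⟩ := hr
      rw [hD1, Finset.mem_filter]
      have hs' : r - ((1:ℤ), (0:ℤ)) = s := by rw [← hsr]; ring
      rw [hs']
      refine ⟨hs, fun hc => hrL ?_⟩
      have : (s.1 + 1, s.2) = r := by rw [← hsr]; ext <;> simp
      rwa [← this]
    · intro r _ r' _ h
      have := congrArg (· + ((1:ℤ), (0:ℤ))) h
      simpa using this
  have hb4 : D4.card ≤ D2.card := by
    have he : D4 = L \ L.image (fun r => r + ((0:ℤ), (1:ℤ))) := by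
      ext r
      rw [hD4, Finset.mem_filter, Finset.mem_sdiff, Finset.mem_image]
      constructor
      · rintro ⟨hrL, hr⟩
        refine ⟨hrL, fun ⟨s, hs, hsr⟩ => hr ?_⟩
        have : s = (r.1, r.2 - 1) := by
          rw [Prod.ext_iff] at hsr ⊢
          simp only [Prod.fst_add, Prod.snd_add] at hsr
          constructor <;> simp <;> omega
        rwa [← this]
      · rintro ⟨hrL, hr⟩
        refine ⟨hrL, fun hc => hr ⟨(r.1, r.2 - 1), hc, ?_⟩⟩
        rw [Prod.ext_iff]
        constructor <;> simp
    rw [he, Finset.card_sdiff_comm (by rw [Finset.card_image_of_injective _ hinj2])]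
    apply Finset.card_le_card_of_injOn (fun r => r - ((0:ℤ), (1:ℤ)))
    · intro r hr
      simp only [Finset.mem_coe] at hr ⊢
      rw [Finset.mem_sdiff, Finset.mem_image] at hr
      obtain ⟨⟨s, hs, hsr⟩, hrL⟩ := hr
      rw [hD2, Finset.mem_filter]
      have hs' : r - ((0:ℤ), (1:ℤ)) = s := by rw [← hsr]; ring
      rw [hs']
      refine ⟨hs, fun hc => hrL ?_⟩
      have : (s.1, s.2 + 1) = r := by rw [← hsr]; ext <;> simp
      rwa [← this]
    · intro r _ r' _ h
      have := congrArg (· + ((0:ℤ), (1:ℤ))) h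
      simpa using this
  calc (Dset L).card ≤ (D1 ∪ D2 ∪ D3 ∪ D4).card := Finset.card_le_card hsub
    _ ≤ D1.card + D2.card + D3.card + D4.card := by
        calc (D1 ∪ D2 ∪ D3 ∪ D4).card ≤ (D1 ∪ D2 ∪ D3).card + D4.card :=
              Finset.card_union_le _ _
          _ ≤ (D1 ∪ D2).card + D3.card + D4.card := by
              have := Finset.card_union_le (D1 ∪ D2) D3
              omega
          _ ≤ D1.card + D2.card + D3.card + D4.card := by
              have := Finset.card_union_le D1 D2
              omega
    _ ≤ 4 * (latBoundary L).card := by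
        have h1 := Finset.card_le_card hb1
        have h2 := Finset.card_le_card hb2
        omega

lemma bad_block_hits (hk : 0 < k) (hl : 0 < l) {L : Finset (ℤ × ℤ)} {ab : ℤ × ℤ}
    {p q : ℤ × ℤ} (hpB : p ∈ Blk k l ab) (hpL : p ∈ L) (hqB : q ∈ Blk k l ab)
    (hqL : q ∉ L) : ∃ r ∈ Blk k l ab, r ∈ Dset L := by
  have hpB' := mem_Zrect.mp hpB
  have hqB' := mem_Zrect.mp hqB
  by_cases hmid : ((q.1, p.2) : ℤ × ℤ) ∈ L
  · obtain ⟨z, hz1, hz2, hz3, hz4⟩ := walk_gen (fun t => ((q.1, t) : ℤ × ℤ) ∈ L)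
      (x := p.2) (y := q.2) hmid (by simpa using hqL)
    refine ⟨(q.1, z), ?_, ?_⟩
    · simp only [Blk]
      rw [mem_Zrect]
      simp only
      omega
    · rw [Dset, Finset.mem_filter]
      refine ⟨hz3, ?_⟩
      rcases hz4 with h | h
      · exact Or.inr (Or.inl h)
      · exact Or.inr (Or.inr (Or.inr h))
  · obtain ⟨z, hz1, hz2, hz3, hz4⟩ := walk_gen (fun t => ((t, p.2) : ℤ × ℤ) ∈ L)
      (x := p.1) (y := q.1) (by simpa using hpL) hmid
    refine ⟨(z, p.2), ?_, ?_⟩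
    · simp only [Blk]
      rw [mem_Zrect]
      simp only
      omega
    · rw [Dset, Finset.mem_filter]
      refine ⟨hz3, ?_⟩
      rcases hz4 with h | h
      · exact Or.inl h
      · exact Or.inr (Or.inr (Or.inl h))

noncomputable def meetIdx (k l : ℕ) (L : Finset (ℤ × ℤ)) : Finset (ℤ × ℤ) :=
  L.image (blkIdx k l)

lemma cover_meetIdx (hk : 0 < k) (hl : 0 < l) (L : Finset (ℤ × ℤ)) :
    L ⊆ (meetIdx k l L).biUnion (Blk k l) := by
  intro p hp
  rw [Finset.mem_biUnion]
  exact ⟨blkIdx k l p, Finset.mem_image_of_mem _ hp, mem_blkIdx hk hl p⟩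

lemma good_card_le (hk : 0 < k) (hl : 0 < l) (L : Finset (ℤ × ℤ)) :
    k * l * ((meetIdx k l L).filter (fun ab => Blk k l ab ⊆ L)).card ≤ L.card := by
  classical
  set good := (meetIdx k l L).filter (fun ab => Blk k l ab ⊆ L) with hgood
  have hdisj : ∀ x ∈ good, ∀ y ∈ good, x ≠ y → Disjoint (Blk k l x) (Blk k l y) := by
    intro x _ y _ hxy
    rw [Finset.disjoint_left]
    intro p hpx hpy
    exact hxy ((blkIdx_eq_of_mem hk hl hpx).symm.trans (blkIdx_eq_of_mem hk hl hpy))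
  have hsub : good.biUnion (Blk k l) ⊆ L := by
    intro p hp
    rw [Finset.mem_biUnion] at hp
    obtain ⟨ab, hab, hpab⟩ := hp
    rw [hgood, Finset.mem_filter] at hab
    exact hab.2 hpab
  calc k * l * good.card = ∑ ab ∈ good, (Blk k l ab).card := by
        rw [Finset.sum_congr rfl (fun ab _ => by rw [Blk, Zrect_card]), Finset.sum_const,
          smul_eq_mul, mul_comm]
    _ = (good.biUnion (Blk k l)).card := (Finset.card_biUnion hdisj).symm
    _ ≤ L.card := Finset.card_le_card hsub

lemma bad_card_le (hk : 0 < k) (hl : 0 < l) (L : Finset (ℤ × ℤ)) :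
    ((meetIdx k l L).filter (fun ab => ¬ Blk k l ab ⊆ L)).card
      ≤ 4 * (latBoundary L).card := by
  classical
  set bad := (meetIdx k l L).filter (fun ab => ¬ Blk k l ab ⊆ L) with hbad
  have key : ∀ ab ∈ bad, ∃ r, r ∈ Blk k l ab ∧ r ∈ Dset L := by
    intro ab hab
    rw [hbad, Finset.mem_filter] at hab
    obtain ⟨p, hpL, hpidx⟩ := Finset.mem_image.mp hab.1
    rw [Finset.not_subset] at hab
    obtain ⟨q, hqB, hqL⟩ := hab.2
    obtain ⟨r, hr1, hr2⟩ := bad_block_hits hk hl (hpidx ▸ mem_blkIdx hk hl p) hpL hqB hqL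
    exact ⟨r, hr1, hr2⟩
  calc bad.card ≤ (Dset L).card := by
        apply Finset.card_le_card_of_injOn
          (fun ab => if h : ∃ r, r ∈ Blk k l ab ∧ r ∈ Dset L then h.choose else (0, 0))
        · intro ab hab
          simp only [Finset.mem_coe] at hab ⊢
          rw [dif_pos (key ab hab)]
          exact (key ab hab).choose_spec.2
        · intro ab hab ab' hab' he
          rw [Finset.mem_coe] at hab hab'
          simp only at he
          rw [dif_pos (key ab hab), dif_pos (key ab' hab')] at he
          have h1 := (key ab hab).choose_spec.1
          have h2 := (key ab' hab').choose_spec.1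
          rw [he] at h1
          exact (blkIdx_eq_of_mem hk hl h1).symm.trans (blkIdx_eq_of_mem hk hl h2)
    _ ≤ 4 * (latBoundary L).card := Dset_card_le L

end BadCount

section MainLemmas
variable {A : Type*} [Fintype A] {U : Set ((ℤ × ℤ) → A)}

lemma log_pc_nonneg (hU : U.Nonempty) (L : Finset (ℤ × ℤ)) :
    0 ≤ Real.log (patternCount U L) :=
  Real.log_nonneg (by exact_mod_cast pc_pos hU L)

/-- Upper bound : covering by grid blocks. -/
lemma log_pc_upper (hU : U.Nonempty)
    (hshift : ∀ v : ℤ × ℤ, ∀ x ∈ U, (fun p => x (p + v)) ∈ U)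
    (k l : ℕ) (hk : 0 < k) (hl : 0 < l) (L : Finset (ℤ × ℤ)) :
    Real.log (patternCount U L) ≤
      ((L.card : ℝ) / ((k : ℝ) * l) + 4 * (latBoundary L).card) *
        Real.log (patternCount U (Zrect k l (0, 0))) := by
  classical
  set Γ := patternCount U (Zrect k l (0, 0)) with hΓ
  have hΓ1 : 1 ≤ Γ := pc_pos hU _
  have hlogΓ : 0 ≤ Real.log Γ := Real.log_nonneg (by exact_mod_cast hΓ1)
  have hblk : ∀ ab : ℤ × ℤ, patternCount U (Blk k l ab) = Γ := by
    intro ab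
    rw [hΓ, Blk, Zrect_translate k l ((k : ℤ) * ab.1, (l : ℤ) * ab.2)]
    exact pc_translate hU hshift _ _
  have hcount : patternCount U L ≤ Γ ^ (meetIdx k l L).card := by
    calc patternCount U L ≤ patternCount U ((meetIdx k l L).biUnion (Blk k l)) :=
          pc_mono hU (cover_meetIdx hk hl L)
      _ ≤ ∏ ab ∈ meetIdx k l L, patternCount U (Blk k l ab) := pc_biUnion_le hU _ _
      _ = Γ ^ (meetIdx k l L).card := by
          rw [Finset.prod_congr rfl (fun ab _ => hblk ab), Finset.prod_const]
  have hlog : Real.log (patternCount U L) ≤ ((meetIdx k l L).card : ℝ) * Real.log Γ := by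
    calc Real.log (patternCount U L) ≤ Real.log ((Γ : ℝ) ^ (meetIdx k l L).card) := by
          apply Real.log_le_log (by exact_mod_cast pc_pos hU L)
          exact_mod_cast hcount
      _ = ((meetIdx k l L).card : ℝ) * Real.log Γ := by rw [Real.log_pow]
  have hsplit : (meetIdx k l L).card
      = ((meetIdx k l L).filter (fun ab => Blk k l ab ⊆ L)).card
        + ((meetIdx k l L).filter (fun ab => ¬ Blk k l ab ⊆ L)).card :=
    (Finset.card_filter_add_card_filter_not _).symm
  have hgood := good_card_le hk hl L
  have hbad := bad_card_le hk hl L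
  have hklpos : (0:ℝ) < (k : ℝ) * l := by positivity
  have hcardle : ((meetIdx k l L).card : ℝ)
      ≤ (L.card : ℝ) / ((k : ℝ) * l) + 4 * (latBoundary L).card := by
    rw [hsplit]
    push_cast
    have h1 : (((meetIdx k l L).filter (fun ab => Blk k l ab ⊆ L)).card : ℝ)
        ≤ (L.card : ℝ) / ((k : ℝ) * l) := by
      rw [le_div_iff₀ hklpos]
      have : ((k : ℝ) * l) * ((meetIdx k l L).filter (fun ab => Blk k l ab ⊆ L)).card
          ≤ (L.card : ℝ) := by exact_mod_cast hgood
      linarith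
    have h2 : (((meetIdx k l L).filter (fun ab => ¬ Blk k l ab ⊆ L)).card : ℝ)
        ≤ 4 * (latBoundary L).card := by exact_mod_cast hbad
    linarith
  calc Real.log (patternCount U L) ≤ ((meetIdx k l L).card : ℝ) * Real.log Γ := hlog
    _ ≤ ((L.card : ℝ) / ((k : ℝ) * l) + 4 * (latBoundary L).card) * Real.log Γ :=
        mul_le_mul_of_nonneg_right hcardle hlogΓ

/-- The finite pattern set on a window, as a `Finset` of functions on the subtype. -/
noncomputable def patFin (U : Set ((ℤ × ℤ) → A)) (Q : Finset (ℤ × ℤ)) :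
    Finset ({x // x ∈ Q} → A) :=
  (Set.toFinite ((fun x : (ℤ × ℤ) → A => fun p : {x // x ∈ Q} => x (p : ℤ × ℤ)) '' U)).toFinset

lemma patFin_card (U : Set ((ℤ × ℤ) → A)) (Q : Finset (ℤ × ℤ)) :
    (patFin U Q).card = patternCount U Q := by
  rw [patternCount, ← Set.ncard_coe_finset, patFin, Set.Finite.coe_toFinset]

lemma patFin_nonempty (hU : U.Nonempty) (Q : Finset (ℤ × ℤ)) : (patFin U Q).Nonempty := by
  obtain ⟨x, hx⟩ := hU
  exact ⟨_, (Set.Finite.mem_toFinset _).mpr ⟨x, hx, rfl⟩⟩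

lemma shProj_card_eq (hU : U.Nonempty) (Q X : Finset (ℤ × ℤ)) (hXQ : X ⊆ Q) :
    (shProj (patFin U Q)
        (Finset.univ.filter (fun i : {x // x ∈ Q} => (i : ℤ × ℤ) ∈ X))).card
      = patternCount U X := by
  classical
  set B := Finset.univ.filter (fun i : {x // x ∈ Q} => (i : ℤ × ℤ) ∈ X) with hB
  set F : ((ℤ × ℤ) → A) → ({x // x ∈ Q} → A) :=
    fun x => fun p : {x // x ∈ Q} => x (p : ℤ × ℤ) with hF
  set pm : ({x // x ∈ Q} → A) → ({x // x ∈ Q} → Option A) :=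
    fun f i => if i ∈ B then some (f i) else none with hpm
  have h1 : (shProj (patFin U Q) B).card = (pm '' (F '' U)).ncard := by
    rw [shProj, ← Set.ncard_coe_finset, Finset.coe_image, patFin, Set.Finite.coe_toFinset]
  have h2 : pm '' (F '' U) = (fun x => pm (F x)) '' U := Set.image_image pm F U
  rw [h1, h2]
  have h3 := countEq U hU (fun x => pm (F x))
    (fun x => fun p : {x // x ∈ X} => x (p : ℤ × ℤ)) ?_
  · rw [h3]
    rfl
  · intro x hx y hy
    constructor
    · intro hxy
      rw [restr_eq_iff]
      intro p hp
      have hpB : (⟨p, hXQ hp⟩ : {x // x ∈ Q}) ∈ B := by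
        rw [hB, Finset.mem_filter]
        exact ⟨Finset.mem_univ _, hp⟩
      have := congrFun hxy ⟨p, hXQ hp⟩
      simp only [hpm, if_pos hpB] at this
      exact Option.some_injective _ this
    · intro hxy
      rw [restr_eq_iff] at hxy
      funext i
      simp only [hpm]
      by_cases hiB : i ∈ B
      · rw [if_pos hiB, if_pos hiB]
        have hiX : (i : ℤ × ℤ) ∈ X := by
          rw [hB, Finset.mem_filter] at hiB
          exact hiB.2
        simp only [hF]
        rw [hxy _ hiX]
      · rw [if_neg hiB, if_neg hiB]

/-- The set of relevant translation vectors. -/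
noncomputable def transVecs (L : Finset (ℤ × ℤ)) (s : ℕ) : Finset (ℤ × ℤ) :=
  (Zrect s s (0, 0)).biUnion (fun q => L.image (fun p => q - p))

/-- Shearer applied to the window `Zrect s s`. -/
lemma shearer_application (hU : U.Nonempty)
    (hshift : ∀ v : ℤ × ℤ, ∀ x ∈ U, (fun p => x (p + v)) ∈ U)
    (L : Finset (ℤ × ℤ)) (s : ℕ) :
    (L.card : ℝ) * Real.log (patternCount U (Zrect s s (0, 0)))
      ≤ ((transVecs L s).card : ℝ) * Real.log (patternCount U L) := by
  classical
  set Q := Zrect s s (0, 0) with hQ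
  set S := patFin U Q with hS
  have hSne : S.Nonempty := patFin_nonempty hU Q
  set B : {v // v ∈ transVecs L s} → Finset {x // x ∈ Q} :=
    fun v => Finset.univ.filter
      (fun i : {x // x ∈ Q} => (i : ℤ × ℤ) ∈ (L.image (· + (v : ℤ × ℤ))) ∩ Q) with hBdef
  have hcov : ∀ i : {x // x ∈ Q},
      L.card ≤ (Finset.univ.filter (fun v : {v // v ∈ transVecs L s} => i ∈ B v)).card := by
    intro i
    rcases L.eq_empty_or_nonempty with rfl | ⟨p₀, hp₀⟩
    · simp
    · have hjunk : ∀ {p : ℤ × ℤ}, p ∈ L → ((i : ℤ × ℤ) - p) ∈ transVecs L s := by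
        intro p hp
        rw [transVecs, Finset.mem_biUnion]
        exact ⟨(i : ℤ × ℤ), i.2, Finset.mem_image.mpr ⟨p, hp, rfl⟩⟩
      apply Finset.card_le_card_of_injOn
        (fun p => if h : ((i : ℤ × ℤ) - p) ∈ transVecs L s then
          (⟨(i : ℤ × ℤ) - p, h⟩ : {v // v ∈ transVecs L s})
          else ⟨(i : ℤ × ℤ) - p₀, hjunk hp₀⟩)
      · intro p hp
        simp only [Finset.mem_coe] at hp ⊢
        rw [dif_pos (hjunk hp), Finset.mem_filter]
        refine ⟨Finset.mem_univ _, ?_⟩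
        rw [hBdef, Finset.mem_filter]
        refine ⟨Finset.mem_univ _, Finset.mem_inter.mpr ⟨?_, i.2⟩⟩
        refine Finset.mem_image.mpr ⟨p, hp, ?_⟩
        show p + ((i : ℤ × ℤ) - p) = (i : ℤ × ℤ)
        ring
      · intro p hp p' hp' he
        rw [Finset.mem_coe] at hp hp'
        simp only at he
        rw [dif_pos (hjunk hp), dif_pos (hjunk hp')] at he
        have hval : (i : ℤ × ℤ) - p = (i : ℤ × ℤ) - p' := congrArg Subtype.val he
        exact sub_right_injective hval
  have hmain := shearer_main hSne B L.card hcov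
  rw [patFin_card] at hmain
  calc (L.card : ℝ) * Real.log (patternCount U Q)
      ≤ ∑ v : {v // v ∈ transVecs L s}, Real.log ((shProj S (B v)).card) := hmain
    _ ≤ ∑ _v : {v // v ∈ transVecs L s}, Real.log (patternCount U L) := by
        apply Finset.sum_le_sum
        intro v _
        have heq : (shProj S (B v)).card
            = patternCount U ((L.image (· + (v : ℤ × ℤ))) ∩ Q) :=
          shProj_card_eq hU Q _ (Finset.inter_subset_right)
        rw [heq]
        have h1 : patternCount U ((L.image (· + (v : ℤ × ℤ))) ∩ Q)
            ≤ patternCount U (L.image (· + (v : ℤ × ℤ))) :=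
          pc_mono hU Finset.inter_subset_left
        have h2 : patternCount U (L.image (· + (v : ℤ × ℤ))) = patternCount U L :=
          pc_translate hU hshift L _
        apply Real.log_le_log (by exact_mod_cast pc_pos hU _)
        exact_mod_cast h2 ▸ h1
    _ = ((transVecs L s).card : ℝ) * Real.log (patternCount U L) := by
        rw [Finset.sum_const, Finset.card_univ, Fintype.card_coe, nsmul_eq_mul]
end MainLemmas

section LowerBound
variable {A : Type*} [Fintype A] {U : Set ((ℤ × ℤ) → A)}

lemma rectEntropy_le (hU : U.Nonempty) (s : ℕ) :
    rectEntropy U * ((s:ℝ) + 1)^2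
      ≤ Real.log (patternCount U (Zrect (s+1) (s+1) (0, 0))) := by
  have hbdd : BddBelow (Set.range (fun mn : ℕ × ℕ =>
      (1 / (((mn.1 + 1) * (mn.2 + 1) : ℕ) : ℝ)) *
        Real.log (patternCount U (Zrect (mn.1 + 1) (mn.2 + 1) (0, 0))))) := by
    refine ⟨0, ?_⟩
    rintro _ ⟨mn, rfl⟩
    have h1 : (0:ℝ) ≤ 1 / (((mn.1 + 1) * (mn.2 + 1) : ℕ) : ℝ) := by positivity
    exact mul_nonneg h1 (log_pc_nonneg hU _)
  have hle := ciInf_le hbdd (s, s)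
  rw [rectEntropy] at *
  have hD : (0:ℝ) < (((s + 1) * (s + 1) : ℕ) : ℝ) := by positivity
  rw [one_div, inv_mul_eq_div, le_div_iff₀ hD] at hle
  calc rectEntropy U * ((s:ℝ) + 1)^2
      = rectEntropy U * (((s + 1) * (s + 1) : ℕ) : ℝ) := by push_cast; ring
    _ ≤ _ := hle

lemma rectEntropy_nonneg (hU : U.Nonempty) : 0 ≤ rectEntropy U := by
  unfold rectEntropy
  apply le_ciInf
  intro mn
  have h1 : (0:ℝ) ≤ 1 / (((mn.1 + 1) * (mn.2 + 1) : ℕ) : ℝ) := by positivity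
  exact mul_nonneg h1 (log_pc_nonneg hU _)

lemma transVecs_card_le (L : Finset (ℤ × ℤ)) (s : ℕ) :
    (transVecs L s).card ≤ (s + 2 * (L.sup (fun p => p.1.natAbs ⊔ p.2.natAbs)))^2 := by
  set R := L.sup (fun p => p.1.natAbs ⊔ p.2.natAbs) with hR
  have hsub : transVecs L s ⊆ Zrect (s + 2*R) (s + 2*R) (-(R:ℤ), -(R:ℤ)) := by
    intro v hv
    rw [transVecs, Finset.mem_biUnion] at hv
    obtain ⟨q, hq, hv⟩ := hv
    obtain ⟨p, hp, rfl⟩ := Finset.mem_image.mp hv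
    have hq' := mem_Zrect.mp hq
    simp only at hq'
    have hpR : p.1.natAbs ≤ R ∧ p.2.natAbs ≤ R := by
      constructor
      · exact le_trans (le_sup_left) (Finset.le_sup (f := fun p : ℤ × ℤ => p.1.natAbs ⊔ p.2.natAbs) hp)
      · exact le_trans (le_sup_right) (Finset.le_sup (f := fun p : ℤ × ℤ => p.1.natAbs ⊔ p.2.natAbs) hp)
    rw [mem_Zrect]
    simp only [Prod.fst_sub, Prod.snd_sub]
    omega
  calc (transVecs L s).card ≤ (Zrect (s + 2*R) (s + 2*R) (-(R:ℤ), -(R:ℤ))).card :=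
        Finset.card_le_card hsub
    _ = (s + 2*R) * (s + 2*R) := Zrect_card _ _ _
    _ = (s + 2*R)^2 := (sq (s + 2*R)).symm

/-- The key lower bound : `h_r(U) * |L| ≤ log Γ(L,U)` for every finite window. -/
lemma rectEntropy_mul_card_le (hU : U.Nonempty)
    (hshift : ∀ v : ℤ × ℤ, ∀ x ∈ U, (fun p => x (p + v)) ∈ U)
    (L : Finset (ℤ × ℤ)) :
    rectEntropy U * L.card ≤ Real.log (patternCount U L) := by
  set C := Real.log (patternCount U L) with hC
  have hCnn : 0 ≤ C := log_pc_nonneg hU L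
  set R := L.sup (fun p => p.1.natAbs ⊔ p.2.natAbs) with hR
  -- the chain of inequalities, for each s
  have chain : ∀ s : ℕ,
      rectEntropy U * L.card * ((s:ℝ) + 1)^2 ≤ (((s:ℝ) + 1) + 2*R)^2 * C := by
    intro s
    have h1 := rectEntropy_le hU s
    have h2 := shearer_application hU hshift L (s+1)
    have h3 : ((transVecs L (s+1)).card : ℝ) ≤ (((s:ℝ) + 1) + 2*R)^2 := by
      have := transVecs_card_le L (s+1)
      calc ((transVecs L (s+1)).card : ℝ) ≤ (((s + 1 + 2*R : ℕ))^2 : ℕ) := by exact_mod_cast this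
        _ = (((s:ℝ) + 1) + 2*R)^2 := by push_cast; ring
    calc rectEntropy U * L.card * ((s:ℝ) + 1)^2
        = (L.card : ℝ) * (rectEntropy U * ((s:ℝ) + 1)^2) := by ring
      _ ≤ (L.card : ℝ) * Real.log (patternCount U (Zrect (s+1) (s+1) (0, 0))) := by
          apply mul_le_mul_of_nonneg_left h1 (by positivity)
      _ ≤ ((transVecs L (s+1)).card : ℝ) * C := h2
      _ ≤ (((s:ℝ) + 1) + 2*R)^2 * C := mul_le_mul_of_nonneg_right h3 hCnn
  -- pass to the limit
  set g : ℕ → ℝ := fun s => (1 + 2*(R:ℝ)/((s:ℝ)+1))^2 * C with hg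
  have hgle : ∀ s : ℕ, rectEntropy U * L.card ≤ g s := by
    intro s
    have hs1 : (0:ℝ) < ((s:ℝ) + 1)^2 := by positivity
    have hgeq : g s = ((((s:ℝ) + 1) + 2*R)^2 * C) / ((s:ℝ)+1)^2 := by
      rw [hg]
      have hne : ((s:ℝ) + 1) ≠ 0 := by positivity
      field_simp
    rw [hgeq, le_div_iff₀ hs1]
    exact chain s
  have htend : Filter.Tendsto g Filter.atTop (nhds C) := by
    have h1 : Filter.Tendsto (fun s : ℕ => ((s:ℝ) + 1)) Filter.atTop Filter.atTop :=
      Filter.tendsto_atTop_add_const_right _ _ tendsto_natCast_atTop_atTop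
    have h2 : Filter.Tendsto (fun s : ℕ => 2*(R:ℝ)/((s:ℝ)+1)) Filter.atTop (nhds 0) :=
      Filter.Tendsto.div_atTop tendsto_const_nhds h1
    have h3 : Filter.Tendsto (fun s : ℕ => (1 + 2*(R:ℝ)/((s:ℝ)+1))^2 * C) Filter.atTop
        (nhds ((1 + 0)^2 * C)) :=
      Filter.Tendsto.mul_const C (Filter.Tendsto.pow (tendsto_const_nhds.add h2) 2)
    simpa using h3
  exact ge_of_tendsto' htend hgle

end LowerBound

/-- Corollary 3.4: for a horizontally (resp. vertically) block gluing shift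
space and a horizontally (resp. vertically) decomposable expanding system with negligible
boundary, `h_Ω(U) = h_r(U)`. -/
theorem entropyAlong_eq_rectEntropy_of_directional_blockGluing {A : Type*} [Fintype A]
    [TopologicalSpace A] [DiscreteTopology A] (hcard : 2 ≤ Fintype.card A)
    (U : Set ((ℤ × ℤ) → A)) (hU : IsShiftSpace U)
    (Ω : ℕ → Finset (ℤ × ℤ)) (hΩ : IsExpandingSystem Ω)
    (hbd : Filter.limsup
      (fun n => ((latBoundary (Ω n)).card : ℝ) / ((Ω n).card : ℝ)) Filter.atTop = 0)
    (hcase : ((∃ M : ℕ, 1 ≤ M ∧ HorizBlockGluingWithGap U M) ∧ HorizDecomposable Ω) ∨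
      ((∃ M : ℕ, 1 ≤ M ∧ VertBlockGluingWithGap U M) ∧ VertDecomposable Ω)) :
    entropyAlong U Ω = rectEntropy U := by
  classical
  obtain ⟨hUne, _, hshift⟩ := hU
  set t : ℕ → ℝ := fun n => (1 / ((Ω n).card : ℝ)) * Real.log (patternCount U (Ω n)) with ht
  have hEA : entropyAlong U Ω = Filter.limsup t Filter.atTop := rfl
  set h := rectEntropy U with hh
  -- cardinality grows
  have hcards : ∀ n, n ≤ (Ω n).card := by
    intro n
    induction n with
    | zero => exact Nat.zero_le _
    | succ n ih =>
        have := Finset.card_lt_card (hΩ.1 n)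
        omega
  have hlogN : (0:ℝ) ≤ Real.log (Fintype.card A) := by
    apply Real.log_nonneg
    have : (1:ℕ) ≤ Fintype.card A := by omega
    exact_mod_cast this
  -- t is nonnegative and bounded above
  have htnn : ∀ n, 0 ≤ t n := by
    intro n
    apply mul_nonneg (by positivity) (log_pc_nonneg hUne _)
  have htub : ∀ n, t n ≤ Real.log (Fintype.card A) := by
    intro n
    rcases Nat.eq_zero_or_pos (Ω n).card with hc | hc
    · simp only [ht, hc, Nat.cast_zero, div_zero, zero_mul]
      exact hlogN
    · have hcR : (0:ℝ) < (Ω n).card := by exact_mod_cast hc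
      have h1 : Real.log (patternCount U (Ω n))
          ≤ ((Ω n).card : ℝ) * Real.log (Fintype.card A) := by
        calc Real.log (patternCount U (Ω n))
            ≤ Real.log ((Fintype.card A : ℝ) ^ (Ω n).card) := by
              apply Real.log_le_log (by exact_mod_cast pc_pos hUne _)
              exact_mod_cast pc_le_pow (Ω n)
          _ = ((Ω n).card : ℝ) * Real.log (Fintype.card A) := Real.log_pow _ _
      calc t n = Real.log (patternCount U (Ω n)) / ((Ω n).card : ℝ) := by
            simp only [ht]; ring
        _ ≤ (((Ω n).card : ℝ) * Real.log (Fintype.card A)) / ((Ω n).card : ℝ) := by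
            gcongr
        _ = Real.log (Fintype.card A) := by field_simp
  have hbddAbove : Filter.IsBoundedUnder (· ≤ ·) Filter.atTop t :=
    isBoundedUnder_of ⟨Real.log (Fintype.card A), htub⟩
  have hbddBelow : Filter.IsBoundedUnder (· ≥ ·) Filter.atTop t :=
    isBoundedUnder_of ⟨0, htnn⟩
  -- lower bound for the limsup
  have hlower : h ≤ Filter.limsup t Filter.atTop := by
    apply Filter.le_limsup_of_frequently_le _ hbddAbove
    apply Filter.Eventually.frequently
    rw [Filter.eventually_atTop]
    refine ⟨1, fun n hn => ?_⟩
    have hcpos : 0 < (Ω n).card := lt_of_lt_of_le hn (hcards n)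
    have hcR : (0:ℝ) < (Ω n).card := by exact_mod_cast hcpos
    have hkey := rectEntropy_mul_card_le hUne hshift (Ω n)
    simp only [ht]
    rw [show (1 / ((Ω n).card : ℝ)) * Real.log (patternCount U (Ω n))
      = Real.log (patternCount U (Ω n)) / ((Ω n).card : ℝ) from by ring, le_div_iff₀ hcR]
    exact hkey
  -- the boundary ratio tends to zero
  set r : ℕ → ℝ := fun n => ((latBoundary (Ω n)).card : ℝ) / ((Ω n).card : ℝ) with hr
  have hrnn : ∀ n, 0 ≤ r n := fun n => by positivity
  have hrub : ∀ n, r n ≤ 1 := by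
    intro n
    rcases Nat.eq_zero_or_pos (Ω n).card with hc | hc
    · simp [hr, hc]
    · have hcR : (0:ℝ) < (Ω n).card := by exact_mod_cast hc
      simp only [hr]
      rw [div_le_one hcR]
      have : (latBoundary (Ω n)).card ≤ (Ω n).card :=
        Finset.card_le_card (Finset.sdiff_subset)
      exact_mod_cast this
  have hrbddAbove : Filter.IsBoundedUnder (· ≤ ·) Filter.atTop r :=
    isBoundedUnder_of ⟨1, hrub⟩
  have hrbddBelow : Filter.IsBoundedUnder (· ≥ ·) Filter.atTop r :=
    isBoundedUnder_of ⟨0, hrnn⟩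
  have hrliminf : Filter.liminf r Filter.atTop = 0 := by
    apply le_antisymm
    · rw [← hbd]
      exact Filter.liminf_le_limsup hrbddAbove hrbddBelow
    · exact Filter.le_liminf_of_le hrbddAbove.isCoboundedUnder_ge
        (Filter.Eventually.of_forall hrnn)
  have hrtend : Filter.Tendsto r Filter.atTop (nhds 0) :=
    tendsto_of_liminf_eq_limsup hrliminf hbd hrbddAbove hrbddBelow
  -- upper bound for the limsup
  have hupper : Filter.limsup t Filter.atTop ≤ h := by
    apply le_of_forall_pos_le_add
    intro ε hε
    -- choose a good rectangle
    have hinf : rectEntropy U < h + ε/2 := by rw [← hh]; linarith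
    obtain ⟨mn, hmn⟩ := exists_lt_of_ciInf_lt (hinf)
    set k := mn.1 + 1 with hk
    set l := mn.2 + 1 with hl
    set Γ := patternCount U (Zrect k l (0, 0)) with hΓ
    have hΓnn : (0:ℝ) ≤ Real.log Γ := log_pc_nonneg hUne _
    have hklR : (0:ℝ) < (k:ℝ) * l := by positivity
    have hcval : (1 / (((k * l : ℕ)) : ℝ)) * Real.log Γ < h + ε/2 := hmn
    -- eventually the boundary term is small
    have hsmall : ∀ᶠ n in Filter.atTop, 4 * r n * Real.log Γ < ε/2 := by
      have htend2 : Filter.Tendsto (fun n => 4 * r n * Real.log Γ) Filter.atTop (nhds 0) := by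
        have := (hrtend.const_mul (4:ℝ)).mul_const (Real.log Γ)
        simpa using this
      exact htend2.eventually_lt_const (by positivity)
    have hbig : ∀ᶠ n in Filter.atTop, 1 ≤ n := Filter.eventually_atTop.mpr ⟨1, fun n hn => hn⟩
    apply Filter.limsup_le_of_le hbddBelow.isCoboundedUnder_le
    filter_upwards [hsmall, hbig] with n hns hnb
    have hcpos : 0 < (Ω n).card := lt_of_lt_of_le hnb (hcards n)
    have hcR : (0:ℝ) < (Ω n).card := by exact_mod_cast hcpos
    have hup := log_pc_upper hUne hshift k l (by omega) (by omega) (Ω n)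
    have hstep : t n ≤ (1 / ((Ω n).card : ℝ)) *
        ((((Ω n).card : ℝ) / ((k : ℝ) * l) + 4 * (latBoundary (Ω n)).card) *
          Real.log Γ) := by
      simp only [ht]
      exact mul_le_mul_of_nonneg_left hup (by positivity)
    have hiden : (1 / ((Ω n).card : ℝ)) *
        ((((Ω n).card : ℝ) / ((k : ℝ) * l) + 4 * (latBoundary (Ω n)).card) * Real.log Γ)
        = (1 / (((k * l : ℕ)) : ℝ)) * Real.log Γ + 4 * r n * Real.log Γ := by
      simp only [hr]
      have hne1 : ((Ω n).card : ℝ) ≠ 0 := ne_of_gt hcR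
      have hne2 : (k:ℝ) * l ≠ 0 := ne_of_gt hklR
      push_cast
      field_simp
    rw [hiden] at hstep
    calc t n ≤ (1 / (((k * l : ℕ)) : ℝ)) * Real.log Γ + 4 * r n * Real.log Γ := hstep
      _ ≤ (h + ε/2) + ε/2 := by
          apply add_le_add (le_of_lt hcval) (le_of_lt hns)
      _ = h + ε := by ring
  rw [hEA]
  exact le_antisymm hupper hlower
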